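/- Let K, Kₙ (n ≥ 1) be compact subsets of [0,∞) containing 0, and suppose d_H(Kₙ, K) → 0 in the Hausdorff metric. Then: (crit1) for every connected component (a,b) of [0, max K] \ K there exists n₀ ≥ 1 such that for all n ≥ n₀ there is a connected component (aₙ,bₙ) of [0, max Kₙ] \ Kₙ with aₙ → a and bₙ → b; and (crit2) whenever n_k → ∞ and (c_k,d_k) are connected components of [0, max K_{n_k}] \ K_{n_k} such that c_k converges to some c and d_k converges to some d ∈ (0,∞] with c ≠ d, then d < ∞ and (c,d) is a connected component of [0, max K] \ K. -/

import Mathlib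

open Filter Topology Set Metric

/-- `(a, b)` is a connected component (a "gap") of `[0, max K] \ K`, for `K` a compact
subset of `[0, ∞)` containing `0`: an open interval with endpoints in `K` containing
no point of `K`. -/
def IsGap (K : Set ℝ) (a b : ℝ) : Prop :=
  a < b ∧ a ∈ K ∧ b ∈ K ∧ Set.Ioo a b ∩ K = ∅

/-- Criterion (crit1): every gap `(a, b)` of `K` is eventually approximated by gaps
`(aₙ, bₙ)` of `Kₙ` with `aₙ → a` and `bₙ → b`. -/
def Crit1 (K : Set ℝ) (Ks : ℕ → Set ℝ) : Prop :=
  ∀ a b : ℝ, IsGap K a b →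
    ∃ (n₀ : ℕ) (A B : ℕ → ℝ),
      (∀ n ≥ n₀, IsGap (Ks n) (A n) (B n)) ∧
      Tendsto A atTop (𝓝 a) ∧ Tendsto B atTop (𝓝 b)

/-- Criterion (crit2): whenever `n_k → ∞`, `(c_k, d_k)` are gaps of `K_{n_k}`,
`c_k → c ∈ ℝ` and `d_k → d ∈ (0, ∞]` (in the extended reals) with `c ≠ d`, then
`d < ∞` and `(c, d)` is a gap of `K`. -/
def Crit2 (K : Set ℝ) (Ks : ℕ → Set ℝ) : Prop :=
  ∀ nk : ℕ → ℕ, Tendsto nk atTop atTop →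
    ∀ c d : ℕ → ℝ, (∀ k, IsGap (Ks (nk k)) (c k) (d k)) →
      ∀ (cl : ℝ) (dl : EReal), Tendsto c atTop (𝓝 cl) →
        Tendsto (fun k => ((d k : ℝ) : EReal)) atTop (𝓝 dl) →
        0 < dl → (cl : EReal) ≠ dl →
        dl ≠ ⊤ ∧ IsGap K cl dl.toReal

/-- If `K, Kₙ` are compact subsets of `[0, ∞)` containing `0` and `d_H(Kₙ, K) → 0`,
then criteria (crit1) and (crit2) hold. -/
theorem hausdorff_tendsto_implies_crit (K : Set ℝ) (Ks : ℕ → Set ℝ)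
    (hK : IsCompact K) (hK0 : (0 : ℝ) ∈ K) (hKpos : K ⊆ Set.Ici 0)
    (hKs : ∀ n, IsCompact (Ks n)) (hKs0 : ∀ n, (0 : ℝ) ∈ Ks n)
    (hKspos : ∀ n, Ks n ⊆ Set.Ici 0)
    (hconv : Tendsto (fun n => hausdorffDist (Ks n) K) atTop (𝓝 0)) :
    Crit1 K Ks ∧ Crit2 K Ks := by
  have hKne : K.Nonempty := ⟨0, hK0⟩
  have hfin : ∀ n, EMetric.hausdorffEdist (Ks n) K ≠ ⊤ := fun n =>
    hausdorffEdist_ne_top_of_nonempty_of_bounded ⟨0, hKs0 n⟩ hKne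
      (hKs n).isBounded hK.isBounded
  constructor
  · -- Crit1
    intro a b hgap
    obtain ⟨hab, haK, hbK, hempty⟩ := hgap
    have ha0 : (0:ℝ) ≤ a := hKpos haK
    set m : ℝ := (a + b) / 2 with hm
    have ham : a < m := by simp only [hm]; linarith
    have hmb : m < b := by simp only [hm]; linarith
    set A : ℕ → ℝ := fun n => sSup (Ks n ∩ Set.Iic m) with hA
    set B : ℕ → ℝ := fun n => sInf (Ks n ∩ Set.Ici m) with hB
    -- the key per-n claim
    have key : ∀ δ : ℝ, 0 < δ → δ ≤ (b - a)/4 → ∀ n, hausdorffDist (Ks n) K < δ →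
        IsGap (Ks n) (A n) (B n) ∧ |A n - a| ≤ δ ∧ |B n - b| ≤ δ := by
      intro δ hδ hδ4 n hn
      have hSIic : IsCompact (Ks n ∩ Set.Iic m) := (hKs n).inter_right isClosed_Iic
      have hSIci : IsCompact (Ks n ∩ Set.Ici m) := (hKs n).inter_right isClosed_Ici
      have hIicne : (Ks n ∩ Set.Iic m).Nonempty :=
        ⟨0, hKs0 n, by simp only [Set.mem_Iic]; linarith⟩
      obtain ⟨y, hyKs, hyb⟩ := exists_dist_lt_of_hausdorffDist_lt' hbK hn (hfin n)
      have hyb' : |y - b| < δ := by rwa [Real.dist_eq] at hyb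
      rw [abs_lt] at hyb'
      have hIcine : (Ks n ∩ Set.Ici m).Nonempty :=
        ⟨y, hyKs, by simp only [Set.mem_Ici, hm]; linarith⟩
      have hAmem : A n ∈ Ks n ∩ Set.Iic m := hSIic.sSup_mem hIicne
      have hBmem : B n ∈ Ks n ∩ Set.Ici m := hSIci.sInf_mem hIcine
      -- A n ≥ a - δ
      obtain ⟨z, hzKs, hza⟩ := exists_dist_lt_of_hausdorffDist_lt' haK hn (hfin n)
      have hza' : |z - a| < δ := by rwa [Real.dist_eq] at hza
      rw [abs_lt] at hza'
      have hzIic : z ∈ Ks n ∩ Set.Iic m :=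
        ⟨hzKs, by simp only [Set.mem_Iic, hm]; linarith⟩
      have hAlb : a - δ ≤ A n := le_trans (by linarith) (le_csSup hSIic.bddAbove hzIic)
      -- A n ≤ a + δ
      have hAub : A n ≤ a + δ := by
        by_contra hcon
        push_neg at hcon
        obtain ⟨x, hxK, hxd⟩ := exists_dist_lt_of_hausdorffDist_lt hAmem.1 hn (hfin n)
        rw [Real.dist_eq, abs_lt] at hxd
        have hxab : x ∈ Set.Ioo a b := by
          constructor
          · linarith
          · have := hAmem.2; simp only [Set.mem_Iic] at this
            simp only [hm] at this; linarith
        exact absurd hempty (Set.Nonempty.ne_empty ⟨x, hxab, hxK⟩)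
      -- B n ≤ b + δ
      have hBub : B n ≤ b + δ := by
        refine le_trans (csInf_le hSIci.bddBelow ⟨hyKs, ?_⟩) (by linarith)
        simp only [Set.mem_Ici, hm]; linarith
      -- B n ≥ b - δ
      have hBm : m ≤ B n := by simpa using hBmem.2
      have hBlb : b - δ ≤ B n := by
        by_contra hcon
        push_neg at hcon
        obtain ⟨x, hxK, hxd⟩ := exists_dist_lt_of_hausdorffDist_lt hBmem.1 hn (hfin n)
        rw [Real.dist_eq, abs_lt] at hxd
        have hxab : x ∈ Set.Ioo a b := by
          constructor
          · simp only [hm] at hBm; linarith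
          · linarith
        exact absurd hempty (Set.Nonempty.ne_empty ⟨x, hxab, hxK⟩)
      refine ⟨⟨by linarith, hAmem.1, hBmem.1, ?_⟩, abs_le.2 ⟨by linarith, by linarith⟩,
        abs_le.2 ⟨by linarith, by linarith⟩⟩
      ext t
      simp only [Set.mem_inter_iff, Set.mem_Ioo, Set.mem_empty_iff_false, iff_false, not_and]
      rintro ⟨hAt, htB⟩ htKs
      rcases le_total t m with hle | hge
      · exact absurd (le_csSup hSIic.bddAbove ⟨htKs, hle⟩) (not_le.2 hAt)
      · exact absurd (csInf_le hSIci.bddBelow ⟨htKs, hge⟩) (not_le.2 htB)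
    have hδ40 : (0:ℝ) < (b - a)/4 := by linarith
    have hev : ∀ᶠ n in atTop, hausdorffDist (Ks n) K < (b - a)/4 :=
      hconv.eventually_lt_const hδ40
    obtain ⟨n₀, hn₀⟩ := eventually_atTop.1 hev
    refine ⟨n₀, A, B, fun n hn => (key _ hδ40 le_rfl n (hn₀ n hn)).1, ?_, ?_⟩
    · rw [Metric.tendsto_atTop]
      intro ε hε
      have hδ : 0 < min (ε/2) ((b-a)/4) := lt_min (by linarith) hδ40
      obtain ⟨N, hN⟩ := eventually_atTop.1 (hconv.eventually_lt_const hδ)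
      exact ⟨N, fun n hn => by
        have := (key _ hδ (min_le_right _ _) n (hN n hn)).2.1
        rw [Real.dist_eq]
        calc |A n - a| ≤ min (ε/2) ((b-a)/4) := this
          _ ≤ ε/2 := min_le_left _ _
          _ < ε := by linarith⟩
    · rw [Metric.tendsto_atTop]
      intro ε hε
      have hδ : 0 < min (ε/2) ((b-a)/4) := lt_min (by linarith) hδ40
      obtain ⟨N, hN⟩ := eventually_atTop.1 (hconv.eventually_lt_const hδ)
      exact ⟨N, fun n hn => by
        have := (key _ hδ (min_le_right _ _) n (hN n hn)).2.2
        rw [Real.dist_eq]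
        calc |B n - b| ≤ min (ε/2) ((b-a)/4) := this
          _ ≤ ε/2 := min_le_left _ _
          _ < ε := by linarith⟩
  · -- Crit2
    intro nk hnk c d hgaps cl dl hc hd hdlpos hne
    set r : ℕ → ℝ := fun k => hausdorffDist (Ks (nk k)) K with hr
    have hr0 : Tendsto r atTop (𝓝 0) := hconv.comp hnk
    -- bound: dl ≠ ⊤
    have hM : ∀ x ∈ K, x ≤ sSup K := fun x hx => le_csSup hK.bddAbove hx
    set M : ℝ := sSup K with hMdef
    have hdub : ∀ᶠ k in atTop, (d k : EReal) ≤ ((M + 1 : ℝ) : EReal) := by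
      filter_upwards [hr0.eventually_lt_const one_pos] with k hk
      obtain ⟨x, hxK, hdx⟩ := exists_dist_lt_of_hausdorffDist_lt (hgaps k).2.2.1 hk (hfin (nk k))
      rw [Real.dist_eq, abs_lt] at hdx
      have : d k ≤ M + 1 := by have := hM x hxK; linarith
      exact_mod_cast this
    have hdltop : dl ≠ ⊤ := by
      have hle : dl ≤ ((M + 1 : ℝ) : EReal) := le_of_tendsto hd hdub
      exact ne_top_of_le_ne_top (EReal.coe_ne_top _) hle
    have hdlbot : dl ≠ ⊥ := ne_bot_of_gt hdlpos
    -- real convergence of d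
    have hdreal : Tendsto d atTop (𝓝 dl.toReal) := by
      have := (EReal.tendsto_toReal hdltop hdlbot).comp hd
      simpa [Function.comp_def] using this
    set D : ℝ := dl.toReal with hD
    have hdlD : dl = (D : EReal) := (EReal.coe_toReal hdltop hdlbot).symm
    have hclD : cl < D := by
      have hle : cl ≤ D := le_of_tendsto_of_tendsto' hc hdreal (fun k => (hgaps k).1.le)
      have hneq : cl ≠ D := by
        intro h; apply hne; rw [hdlD, h]
      exact lt_of_le_of_ne hle hneq
    -- membership in K via infDist
    have hmem : ∀ (e : ℕ → ℝ) (el : ℝ), Tendsto e atTop (𝓝 el) →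
        (∀ k, e k ∈ Ks (nk k)) → el ∈ K := by
      intro e el hel helm
      rw [hK.isClosed.mem_iff_infDist_zero hKne]
      refine le_antisymm ?_ infDist_nonneg
      have hbound : ∀ k, infDist el K ≤ r k + dist el (e k) := fun k =>
        le_trans infDist_le_infDist_add_dist
          (by
            have := infDist_le_hausdorffDist_of_mem (helm k) (hfin (nk k))
            linarith)
      have hdist : Tendsto (fun k => dist el (e k)) atTop (𝓝 0) := by
        have := tendsto_iff_dist_tendsto_zero.1 hel
        simpa [dist_comm] using this
      have hsum : Tendsto (fun k => r k + dist el (e k)) atTop (𝓝 0) := by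
        simpa using hr0.add hdist
      exact ge_of_tendsto hsum (Eventually.of_forall hbound)
    have hclK : cl ∈ K := hmem c cl hc (fun k => (hgaps k).2.1)
    have hDK : D ∈ K := hmem d D hdreal (fun k => (hgaps k).2.2.1)
    refine ⟨hdltop, hclD, hclK, hDK, ?_⟩
    ext x
    simp only [Set.mem_inter_iff, Set.mem_Ioo, Set.mem_empty_iff_false, iff_false, not_and]
    rintro ⟨hx1, hx2⟩ hxK
    set δ : ℝ := min (x - cl) (D - x) / 2 with hδdef
    have hδpos : 0 < δ := by
      simp only [hδdef]
      have : 0 < min (x - cl) (D - x) := lt_min (by linarith) (by linarith)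
      linarith
    have hδ1 : δ < x - cl := by
      have h1 : min (x - cl) (D - x) ≤ x - cl := min_le_left _ _
      simp only [hδdef]; linarith
    have hδ2 : δ < D - x := by
      have h1 : min (x - cl) (D - x) ≤ D - x := min_le_right _ _
      simp only [hδdef]; linarith
    have hev : ∀ᶠ k in atTop, r k < δ ∧ c k < x - δ ∧ x + δ < d k := by
      filter_upwards [hr0.eventually_lt_const hδpos,
        hc.eventually_lt_const (by linarith : cl < x - δ),
        hdreal.eventually_const_lt (by linarith : x + δ < D)] with k h1 h2 h3
      exact ⟨h1, h2, h3⟩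
    obtain ⟨k, hk1, hk2, hk3⟩ := hev.exists
    obtain ⟨y, hyKs, hxy⟩ := exists_dist_lt_of_hausdorffDist_lt' hxK hk1 (hfin (nk k))
    rw [Real.dist_eq, abs_lt] at hxy
    have : y ∈ Set.Ioo (c k) (d k) ∩ Ks (nk k) :=
      ⟨⟨by linarith, by linarith⟩, hyKs⟩
    rw [(hgaps k).2.2.2] at this
    exact this
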